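/- For Frege's original method with a fixed number n of voters per round (plurality scores may vary), there exist t₀ ≥ 1 and for each candidate j a constant c_j ≥ 0 such that for all t ≥ t₀: σ_j^{t+1} = Σ_{s=1}^{t+1} π_j^s - c_j - n·(ρ_j(t) - ρ_j(t₀)). -/
import Mathlib


open Finset

private lemma fregeAux_card_filter_succ (p : ℕ → Prop) [DecidablePred p] (t : ℕ) :
    (((Finset.Icc 1 (t + 1)).filter p).card : ℤ) =
      (((Finset.Icc 1 t).filter p).card : ℤ) + (if p (t + 1) then 1 else 0) := by
  have h1 : ((Finset.Icc 1 (t+1)).filter p).card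
      = ∑ a ∈ Finset.Icc 1 (t+1), if p a then 1 else 0 := Finset.card_filter _ _
  have h2 : ((Finset.Icc 1 t).filter p).card
      = ∑ a ∈ Finset.Icc 1 t, if p a then 1 else 0 := Finset.card_filter _ _
  rw [h1, h2, Finset.sum_Icc_succ_top (by omega)]
  push_cast
  split <;> simp

/-- Frege's original method with a fixed number of voters: after the total score
stabilizes, each aggregate score equals cumulative votes minus an offset minus
n times the number of wins since stabilization. -/
theorem frege_score_identity_after_stabilization (m n : ℕ) (hm : 2 ≤ m) (hn : 1 ≤ n)
    (π : ℕ → Fin m → ℕ) (hπ : ∀ t, 1 ≤ t → ∑ j, π t j = n)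
    (σ : ℕ → Fin m → ℤ) (w : ℕ → Fin m)
    (hσ1 : ∀ j, σ 1 j = π 1 j)
    (hrec : ∀ t, 1 ≤ t → ∀ j,
      σ (t + 1) j = σ t j + π (t + 1) j -
        (if w t = j then Int.fdiv (∑ k, σ t k) m else 0))
    (hw : ∀ t, 1 ≤ t → ∀ j, σ t j ≤ σ t (w t)) :
    ∃ t₀ : ℕ, 1 ≤ t₀ ∧ ∀ j, ∃ c : ℤ, 0 ≤ c ∧
      ∀ t, t₀ ≤ t →
        σ (t + 1) j =
          (∑ u ∈ Finset.Icc 1 (t + 1), (π u j : ℤ)) - c -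
            n * ((((Finset.Icc 1 t).filter (fun u => w u = j)).card : ℤ) -
              (((Finset.Icc 1 t₀).filter (fun u => w u = j)).card : ℤ)) := by
  set S : ℕ → ℤ := fun t => ∑ k, σ t k with hSdef
  have hmZ : (2 : ℤ) ≤ (m : ℤ) := by exact_mod_cast hm
  have hnZ : (1 : ℤ) ≤ (n : ℤ) := by exact_mod_cast hn
  have hm0 : (0 : ℤ) < (m : ℤ) := by linarith
  have hm0' : (m : ℤ) ≠ 0 := by linarith
  -- sum of π casts
  have hπZ : ∀ t, 1 ≤ t → ∑ j, (π t j : ℤ) = (n : ℤ) := by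
    intro t ht
    rw [← Nat.cast_sum, hπ t ht]
  have hS1 : S 1 = n := by
    simp only [hSdef]
    rw [Finset.sum_congr rfl (fun j _ => hσ1 j)]
    exact hπZ 1 le_rfl
  -- one-step recursion for the total
  have hSstep : ∀ t, 1 ≤ t → S (t + 1) = S t + n - (S t).fdiv m := by
    intro t ht
    have : S (t + 1) = ∑ j, (σ t j + (π (t + 1) j : ℤ) -
        (if w t = j then Int.fdiv (S t) m else 0)) := by
      exact Finset.sum_congr rfl (fun j _ => hrec t ht j)
    rw [this, Finset.sum_sub_distrib, Finset.sum_add_distrib,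
      Finset.sum_ite_eq, hπZ (t + 1) (by omega)]
    simp [hSdef]
  -- invariant: n ≤ S t ≤ n*m
  have hinv : ∀ t, 1 ≤ t → (n : ℤ) ≤ S t ∧ S t ≤ (n : ℤ) * m := by
    intro t ht
    induction t, ht using Nat.le_induction with
    | base => constructor <;> rw [hS1] <;> nlinarith
    | succ t ht ih =>
      obtain ⟨h1, h2⟩ := ih
      have hfd : (S t).fdiv m = S t / m := Int.fdiv_eq_ediv_of_nonneg _ (le_of_lt hm0)
      have hq0 : 0 ≤ S t / m := Int.ediv_nonneg (by linarith) (by linarith)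
      have hqn : S t / m ≤ n := by
        have h := Int.ediv_le_ediv hm0 h2
        rwa [Int.mul_ediv_cancel _ hm0'] at h
      have hdm : (m : ℤ) * (S t / m) + S t % m = S t := Int.mul_ediv_add_emod _ _
      have hr0 : 0 ≤ S t % m := Int.emod_nonneg _ hm0'
      have hrm : S t % m < m := Int.emod_lt_of_pos _ hm0
      rw [hSstep t ht, hfd]
      constructor
      · have : S t / m ≤ S t := Int.ediv_le_self _ (by linarith)
        linarith
      · rcases lt_or_eq_of_le hqn with hlt | heq
        · have hq : S t / m ≤ (n : ℤ) - 1 := by linarith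
          nlinarith
        · have : (m : ℤ) * n ≤ S t := by nlinarith
          linarith
  -- growth until stabilization
  have hgrow : ∀ k : ℕ, S (k + 1) = (n : ℤ) * m ∨ (n : ℤ) + k ≤ S (k + 1) := by
    intro k
    induction k with
    | zero => right; rw [hS1]; simp
    | succ k ih =>
      have ht1 : 1 ≤ k + 1 := by omega
      obtain ⟨h1, h2⟩ := hinv (k + 1) ht1
      have hfd : (S (k+1)).fdiv m = S (k+1) / m := Int.fdiv_eq_ediv_of_nonneg _ (le_of_lt hm0)
      have hdm : (m : ℤ) * (S (k+1) / m) + S (k+1) % m = S (k+1) := Int.mul_ediv_add_emod _ _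
      have hr0 : 0 ≤ S (k+1) % m := Int.emod_nonneg _ hm0'
      rcases eq_or_lt_of_le h2 with heq | hlt
      · left
        rw [hSstep (k+1) ht1, heq]
        have : ((n : ℤ) * m).fdiv m = n := Int.mul_fdiv_cancel _ hm0'
        rw [this]; ring
      · rcases ih with heq | hge
        · left
          rw [hSstep (k+1) ht1, heq]
          have : ((n : ℤ) * m).fdiv m = n := Int.mul_fdiv_cancel _ hm0'
          rw [this]; ring
        · right
          have hqn : S (k+1) / m ≤ (n : ℤ) - 1 := by
            by_contra h
            push_neg at h
            have hq0 : (n : ℤ) ≤ S (k+1) / m := by linarith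
            nlinarith
          rw [hSstep (k+1) ht1, hfd]
          push_cast
          linarith
  -- choose t₀
  refine ⟨n * m + 1, by omega, ?_⟩
  have ht₀1 : 1 ≤ n * m + 1 := by omega
  have hSt₀ : S (n * m + 1) = (n : ℤ) * m := by
    rcases hgrow (n * m) with h | h
    · exact h
    · obtain ⟨_, h2⟩ := hinv (n * m + 1) ht₀1
      push_cast at h
      nlinarith
  -- stability of the total
  have hstable : ∀ t, n * m + 1 ≤ t → S t = (n : ℤ) * m := by
    intro t ht
    induction t, ht using Nat.le_induction with
    | base => exact hSt₀
    | succ t ht ih =>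
      rw [hSstep t (by omega), ih, Int.mul_fdiv_cancel _ hm0']
      ring
  -- simplified recursion after stabilization
  have hrec' : ∀ t, n * m + 1 ≤ t → ∀ j,
      σ (t + 1) j = σ t j + (π (t + 1) j : ℤ) - (if w t = j then (n : ℤ) else 0) := by
    intro t ht j
    have := hrec t (by omega) j
    rw [show (∑ k, σ t k) = S t from rfl, hstable t ht,
      Int.mul_fdiv_cancel _ hm0'] at this
    exact this
  -- upper bound: scores bounded by cumulative votes
  have hub : ∀ t, 1 ≤ t → ∀ j, σ t j ≤ ∑ u ∈ Finset.Icc 1 t, (π u j : ℤ) := by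
    intro t ht
    induction t, ht using Nat.le_induction with
    | base => intro j; simp [hσ1 j]
    | succ t ht ih =>
      intro j
      have hfd0 : 0 ≤ (S t).fdiv m := by
        rw [Int.fdiv_eq_ediv_of_nonneg _ (le_of_lt hm0)]
        exact Int.ediv_nonneg (by linarith [(hinv t ht).1]) (by linarith)
      have := hrec t ht j
      rw [show (∑ k, σ t k) = S t from rfl] at this
      rw [this, Finset.sum_Icc_succ_top (by omega : 1 ≤ t + 1)]
      have hite : (0 : ℤ) ≤ (if w t = j then (S t).fdiv m else 0) := by
        split <;> simp [hfd0]
      linarith [ih j]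
  intro j
  refine ⟨(∑ u ∈ Finset.Icc 1 (n * m + 1), (π u j : ℤ)) - σ (n * m + 1) j +
    (if w (n * m + 1) = j then (n : ℤ) else 0), ?_, ?_⟩
  · have h1 := hub (n * m + 1) ht₀1 j
    have h2 : (0 : ℤ) ≤ (if w (n * m + 1) = j then (n : ℤ) else 0) := by
      split <;> simp
    linarith
  · intro t ht
    induction t, ht using Nat.le_induction with
    | base =>
      rw [hrec' (n * m + 1) le_rfl j,
        Finset.sum_Icc_succ_top (by omega : 1 ≤ n * m + 1 + 1)]
      split_ifs <;> ring
    | succ t ht ih =>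
      rw [hrec' (t + 1) (by omega) j,
        Finset.sum_Icc_succ_top (by omega : 1 ≤ t + 1 + 1), ih,
        fregeAux_card_filter_succ (fun u => w u = j) t]
      split_ifs <;> ring
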